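/- arXiv:2503.05364 — 3 statements merged into one kernel-verified Lean document; each statement's English description precedes it below -/
import Mathlib

section
/- Completeness of NK±: if φ is true under every valuation (⊨ φ), then φ is derivable in NK± from no assumptions. -/
/-- Literals: assertions `pos c` and denials `neg c` of contents `c`. -/
inductive Lit (C : Type) : Type
  | pos : C → Lit C
  | neg : C → Lit C

/-- Dual literal: swaps assertion and denial. -/
def Lit.dual {C : Type} : Lit C → Lit C
  | .pos c => .neg c
  | .neg c => .pos c

/-- Formulas over literals. -/
inductive Form (C : Type) : Type
  | lit : Lit C → Form C
  | bot : Form C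
  | top : Form C
  | and : Form C → Form C → Form C
  | or  : Form C → Form C → Form C
  | imp : Form C → Form C → Form C

/-- The de Morgan dual operator on formulas. -/
def Form.dual {C : Type} : Form C → Form C
  | .lit l => .lit l.dual
  | .bot => .top
  | .top => .bot
  | .and φ ψ => .or φ.dual ψ.dual
  | .or φ ψ => .and φ.dual ψ.dual
  | .imp φ ψ => .and φ ψ.dual

/-- A valuation: maps literals to {0,1} with `v (neg c) = 1 - v (pos c)`. -/
structure Val (C : Type) where
  v : Lit C → ℕ
  le_one : ∀ l, v l ≤ 1
  dual_neg : ∀ c : C, v (Lit.neg c) = 1 - v (Lit.pos c)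

/-- Truth-functional extension of a valuation to formulas. -/
def Val.eval {C : Type} (v : Val C) : Form C → ℕ
  | .lit l => v.v l
  | .bot => 0
  | .top => 1
  | .and φ ψ => min (v.eval φ) (v.eval ψ)
  | .or φ ψ => max (v.eval φ) (v.eval ψ)
  | .imp φ ψ => max (1 - v.eval φ) (v.eval ψ)

/-- Classical consequence. -/
def Entails {C : Type} (Γ : Set (Form C)) (φ : Form C) : Prop :=
  ∀ v : Val C, (∀ γ ∈ Γ, v.eval γ = 1) → v.eval φ = 1

/-- The natural deduction system NK±: intuitionistic rules plus DM and EXC. -/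
inductive NK {C : Type} : Set (Form C) → Form C → Prop
  | hyp {Γ} {φ : Form C} : φ ∈ Γ → NK Γ φ
  | topI {Γ} : NK Γ .top
  | botE {Γ} {φ : Form C} : NK Γ .bot → NK Γ φ
  | impI {Γ} {φ ψ : Form C} : NK (insert φ Γ) ψ → NK Γ (.imp φ ψ)
  | impE {Γ} {φ ψ : Form C} : NK Γ (.imp φ ψ) → NK Γ φ → NK Γ ψ
  | andI {Γ} {φ ψ : Form C} : NK Γ φ → NK Γ ψ → NK Γ (.and φ ψ)
  | andE1 {Γ} {φ ψ : Form C} : NK Γ (.and φ ψ) → NK Γ φ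
  | andE2 {Γ} {φ ψ : Form C} : NK Γ (.and φ ψ) → NK Γ ψ
  | orI1 {Γ} {φ ψ : Form C} : NK Γ φ → NK Γ (.or φ ψ)
  | orI2 {Γ} {φ ψ : Form C} : NK Γ ψ → NK Γ (.or φ ψ)
  | orE {Γ} {φ ψ χ : Form C} :
      NK Γ (.or φ ψ) → NK (insert φ Γ) χ → NK (insert ψ Γ) χ → NK Γ χ
  | dm {Γ} {φ : Form C} : NK (insert φ Γ) .bot → NK Γ φ.dual
  | exc {Γ} {φ : Form C} : NK Γ φ → NK Γ φ.dual → NK Γ .bot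

/-- An atomic rule `(L₁⇒l₁),…,(Lₙ⇒lₙ) ⇒ l` (the case of an empty premiss list,
together with `APP₁`/`APP₂`, covers both forms of atomic rule). -/
structure AtomicRule (C : Type) where
  prems : List (Set (Lit C) × Lit C)
  concl : Lit C

/-- A base is a set of atomic rules. -/
abbrev Base (C : Type) := Set (AtomicRule C)

/-- Derivability in a base.  Conclusions are `some l` (a literal) or `none` (⊥).
Closed under REF, APP₁/APP₂, ABS and DM. -/
inductive Deriv {C : Type} (B : Base C) : Set (Lit C) → Option (Lit C) → Prop
  | ref {L} {l : Lit C} : l ∈ L → Deriv B L (some l)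
  | app {L} (r : AtomicRule C) : r ∈ B →
      (∀ p ∈ r.prems, Deriv B (p.1 ∪ L) (some p.2)) → Deriv B L (some r.concl)
  | abs {L} {l : Lit C} : Deriv B L (some l) → Deriv B L (some l.dual) →
      Deriv B L none
  | dm {L} {l : Lit C} : Deriv B (insert l L) none → Deriv B L (some l.dual)

/-- Support in a base (empty context). -/
def Supp {C : Type} (B : Base C) : Form C → Prop
  | .lit l => Deriv B ∅ (some l)
  | .bot => ∀ l : Lit C, Deriv B ∅ (some l)
  | .top => True
  | .and φ ψ => Supp B φ ∧ Supp B ψ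
  | .or φ ψ => ∀ X : Base C, B ⊆ X → ∀ l : Lit C,
      (∀ Y : Base C, X ⊆ Y → Supp Y φ → Deriv Y ∅ (some l)) →
      (∀ Y : Base C, X ⊆ Y → Supp Y ψ → Deriv Y ∅ (some l)) →
      Deriv X ∅ (some l)
  | .imp φ ψ => ∀ X : Base C, B ⊆ X → Supp X φ → Supp X ψ

/-- Support with a context: `Γ ⊩_B φ`. -/
def SuppCtx {C : Type} (B : Base C) (Γ : Set (Form C)) (φ : Form C) : Prop :=
  ∀ X : Base C, B ⊆ X → (∀ γ ∈ Γ, Supp X γ) → Supp X φ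

/-- Validity: support in every base. -/
def Valid {C : Type} (Γ : Set (Form C)) (φ : Form C) : Prop :=
  ∀ B : Base C, SuppCtx B Γ φ

open Classical in
/-- Auxiliary: chosen literal for content `c` under valuation `v`. -/
noncomputable def signLit {C : Type} (v : Val C) (c : C) : Lit C :=
  if v.v (.pos c) = 1 then .pos c else .neg c

/-- Contents occurring in a formula. -/
def Form.contents {C : Type} : Form C → List C
  | .lit (.pos c) => [c]
  | .lit (.neg c) => [c]
  | .bot => []
  | .top => []
  | .and φ ψ => φ.contents ++ ψ.contents
  | .or φ ψ => φ.contents ++ ψ.contents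
  | .imp φ ψ => φ.contents ++ ψ.contents

theorem Val.eval_le_one {C : Type} (v : Val C) (φ : Form C) : v.eval φ ≤ 1 := by
  induction φ with
  | lit l => exact v.le_one l
  | bot => simp [Val.eval]
  | top => simp [Val.eval]
  | and _ _ ih1 ih2 => simp only [Val.eval]; omega
  | or _ _ ih1 ih2 => simp only [Val.eval]; omega
  | imp _ _ ih1 ih2 => simp only [Val.eval]; omega

theorem Val.v_dual {C : Type} (v : Val C) (l : Lit C) : v.v l.dual = 1 - v.v l := by
  cases l with
  | pos c => exact v.dual_neg c
  | neg c =>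
    have h1 := v.dual_neg c
    have h2 := v.le_one (.pos c)
    simp only [Lit.dual]; omega

theorem NK.weaken {C : Type} {Γ Δ : Set (Form C)} {φ : Form C}
    (h : NK Γ φ) (hs : Γ ⊆ Δ) : NK Δ φ := by
  induction h generalizing Δ with
  | hyp h => exact .hyp (hs h)
  | topI => exact .topI
  | botE _ ih => exact .botE (ih hs)
  | impI _ ih => exact .impI (ih (Set.insert_subset_insert hs))
  | impE _ _ ih1 ih2 => exact .impE (ih1 hs) (ih2 hs)
  | andI _ _ ih1 ih2 => exact .andI (ih1 hs) (ih2 hs)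
  | andE1 _ ih => exact .andE1 (ih hs)
  | andE2 _ ih => exact .andE2 (ih hs)
  | orI1 _ ih => exact .orI1 (ih hs)
  | orI2 _ ih => exact .orI2 (ih hs)
  | orE _ _ _ ih ih1 ih2 =>
      exact .orE (ih hs) (ih1 (Set.insert_subset_insert hs))
        (ih2 (Set.insert_subset_insert hs))
  | dm _ ih => exact .dm (ih (Set.insert_subset_insert hs))
  | exc _ _ ih1 ih2 => exact .exc (ih1 hs) (ih2 hs)

/-- Excluded middle for literals is derivable in NK±. -/
theorem nk_lem {C : Type} (Γ : Set (Form C)) (c : C) :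
    NK Γ (.or (.lit (.pos c)) (.lit (.neg c))) := by
  have h : NK (insert (Form.and (.lit (.neg c)) (.lit (.pos c))) Γ) Form.bot :=
    NK.exc (φ := Form.lit (.pos c))
      (NK.andE2 (.hyp (Set.mem_insert _ _)))
      (NK.andE1 (.hyp (Set.mem_insert _ _)))
  exact NK.dm h

/-- Kalmár's lemma. -/
theorem kalmar {C : Type} (v : Val C) (φ : Form C) (Γ : Set (Form C))
    (hΓ : ∀ c ∈ φ.contents, Form.lit (signLit v c) ∈ Γ) :
    NK Γ (if v.eval φ = 1 then φ else φ.dual) := by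
  induction φ with
  | lit l =>
    cases l with
    | pos c =>
      have hc := hΓ c (by simp [Form.contents])
      by_cases h1 : v.v (.pos c) = 1
      · rw [show (Val.eval v (.lit (.pos c))) = 1 from h1, if_pos rfl]
        have : signLit v c = .pos c := by simp [signLit, h1]
        rw [this] at hc
        exact NK.hyp hc
      · rw [if_neg (show ¬ v.eval (Form.lit (Lit.pos c)) = 1 from h1)]
        have : signLit v c = .neg c := by simp [signLit, h1]
        rw [this] at hc
        show NK Γ (Form.lit (.neg c))
        exact NK.hyp hc
    | neg c =>
      have hc := hΓ c (by simp [Form.contents])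
      have hle := v.le_one (.pos c)
      have hd := v.dual_neg c
      by_cases h1 : v.v (.neg c) = 1
      · have h0 : ¬ v.v (.pos c) = 1 := by omega
        rw [show (Val.eval v (.lit (.neg c))) = 1 from h1, if_pos rfl]
        have : signLit v c = .neg c := by simp [signLit, h0]
        rw [this] at hc
        exact NK.hyp hc
      · have h0 : v.v (.pos c) = 1 := by
          have := v.le_one (.neg c); omega
        rw [if_neg (show ¬ v.eval (Form.lit (Lit.neg c)) = 1 from h1)]
        have : signLit v c = .pos c := by simp [signLit, h0]
        rw [this] at hc
        show NK Γ (Form.lit (.pos c))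
        exact NK.hyp hc
  | bot => rw [if_neg (show ¬ v.eval Form.bot = 1 by simp [Val.eval])]; exact NK.topI
  | top => rw [if_pos (show v.eval Form.top = 1 from rfl)]; exact NK.topI
  | and φ ψ ih1 ih2 =>
    have hφ := ih1 (fun c hc => hΓ c (by simp [Form.contents, hc]))
    have hψ := ih2 (fun c hc => hΓ c (by simp [Form.contents, hc]))
    have l1 := v.eval_le_one φ
    have l2 := v.eval_le_one ψ
    by_cases h1 : v.eval φ = 1
    · by_cases h2 : v.eval ψ = 1
      · rw [if_pos (by simp [Val.eval, h1, h2])]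
        exact NK.andI (by rwa [if_pos h1] at hφ) (by rwa [if_pos h2] at hψ)
      · rw [if_neg (by simp only [Val.eval]; omega)]
        exact NK.orI2 (by rwa [if_neg h2] at hψ)
    · rw [if_neg (by simp only [Val.eval]; omega)]
      exact NK.orI1 (by rwa [if_neg h1] at hφ)
  | or φ ψ ih1 ih2 =>
    have hφ := ih1 (fun c hc => hΓ c (by simp [Form.contents, hc]))
    have hψ := ih2 (fun c hc => hΓ c (by simp [Form.contents, hc]))
    have l1 := v.eval_le_one φ
    have l2 := v.eval_le_one ψ
    by_cases h1 : v.eval φ = 1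
    · rw [if_pos (by simp only [Val.eval]; omega)]
      exact NK.orI1 (by rwa [if_pos h1] at hφ)
    · by_cases h2 : v.eval ψ = 1
      · rw [if_pos (by simp only [Val.eval]; omega)]
        exact NK.orI2 (by rwa [if_pos h2] at hψ)
      · rw [if_neg (by simp only [Val.eval]; omega)]
        exact NK.andI (by rwa [if_neg h1] at hφ) (by rwa [if_neg h2] at hψ)
  | imp φ ψ ih1 ih2 =>
    have hφ := ih1 (fun c hc => hΓ c (by simp [Form.contents, hc]))
    have hψ := ih2 (fun c hc => hΓ c (by simp [Form.contents, hc]))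
    have l1 := v.eval_le_one φ
    have l2 := v.eval_le_one ψ
    by_cases h2 : v.eval ψ = 1
    · rw [if_pos (by simp only [Val.eval]; omega)]
      rw [if_pos h2] at hψ
      exact NK.impI (hψ.weaken (Set.subset_insert _ _))
    · by_cases h1 : v.eval φ = 1
      · rw [if_neg (by simp only [Val.eval]; omega)]
        exact NK.andI (by rwa [if_pos h1] at hφ) (by rwa [if_neg h2] at hψ)
      · rw [if_pos (by simp only [Val.eval]; omega)]
        rw [if_neg h1] at hφ
        refine NK.impI (NK.botE (NK.exc (φ := φ) (NK.hyp (Set.mem_insert _ _)) ?_))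
        exact hφ.weaken (Set.subset_insert _ _)

open Classical in
/-- Override a valuation at a single content. -/
noncomputable def Val.override {C : Type} (v : Val C) (c : C) (b : Bool) : Val C where
  v := fun l => match l with
    | .pos c' => if c' = c then (if b then 1 else 0) else v.v (.pos c')
    | .neg c' => if c' = c then (if b then 0 else 1) else v.v (.neg c')
  le_one := fun l => by
    cases l with
    | pos c' => dsimp only; split_ifs <;> first | omega | exact v.le_one _
    | neg c' => dsimp only; split_ifs <;> first | omega | exact v.le_one _
  dual_neg := fun c' => by
    dsimp only
    by_cases h : c' = c
    · rw [if_pos h, if_pos h]; cases b <;> rfl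
    · rw [if_neg h, if_neg h]; exact v.dual_neg c'

/-- The set of literal formulas chosen by `v` on contents in `cs`. -/
def litSet {C : Type} (v : Val C) (cs : List C) : Set (Form C) :=
  {γ | ∃ c ∈ cs, γ = Form.lit (signLit v c)}

theorem descent {C : Type} (φ : Form C) (cs : List C) (Γ : Set (Form C))
    (H : ∀ v : Val C, NK (Γ ∪ litSet v cs) φ) : NK Γ φ := by
  induction cs generalizing Γ with
  | nil =>
    have v0 : Val C :=
      ⟨fun l => match l with | .pos _ => 1 | .neg _ => 0,
       fun l => by cases l <;> simp, fun c => by simp⟩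
    have := H v0
    have he : litSet v0 ([] : List C) = ∅ := by
      ext γ; simp [litSet]
    rwa [he, Set.union_empty] at this
  | cons c cs ih =>
    refine NK.orE (nk_lem Γ c) ?_ ?_
    · apply ih
      intro v
      have hv := H (v.override c true)
      refine hv.weaken ?_
      rintro γ (hγ | ⟨c'', hc'', rfl⟩)
      · exact Or.inl (Set.mem_insert_of_mem _ hγ)
      · have hpos : (v.override c true).v (.pos c) = 1 := by
          simp [Val.override]
        by_cases hc : c'' = c
        · subst hc
          left
          have : signLit (v.override c'' true) c'' = .pos c'' := by
            simp [signLit, hpos]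
          rw [this]; exact Set.mem_insert _ _
        · right
          have hmem : c'' ∈ cs := by
            rw [List.mem_cons] at hc''
            exact hc''.resolve_left hc
          have : signLit (v.override c true) c'' = signLit v c'' := by
            simp [signLit, Val.override, hc]
          rw [this]; exact ⟨c'', hmem, rfl⟩
    · apply ih
      intro v
      have hv := H (v.override c false)
      refine hv.weaken ?_
      rintro γ (hγ | ⟨c'', hc'', rfl⟩)
      · exact Or.inl (Set.mem_insert_of_mem _ hγ)
      · have hpos : (v.override c false).v (.pos c) = 0 := by
          simp [Val.override]
        by_cases hc : c'' = c
        · subst hc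
          left
          have : signLit (v.override c'' false) c'' = .neg c'' := by
            simp [signLit, hpos]
          rw [this]; exact Set.mem_insert _ _
        · right
          have hmem : c'' ∈ cs := by
            rw [List.mem_cons] at hc''
            exact hc''.resolve_left hc
          have : signLit (v.override c false) c'' = signLit v c'' := by
            simp [signLit, Val.override, hc]
          rw [this]; exact ⟨c'', hmem, rfl⟩

/-- completeness of NK±: every valid formula is provable. -/
theorem NK_complete {C : Type} (φ : Form C) (h : Entails ∅ φ) :
    NK ∅ φ := by
  apply descent φ φ.contents
  intro v
  have hk := kalmar v φ (∅ ∪ litSet v φ.contents)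
    (fun c hc => Or.inr ⟨c, hc, rfl⟩)
  have he : v.eval φ = 1 := h v (by simp)
  rwa [if_pos he] at hk
end

section
/- Atomic cut: for any sets of literals M, L, any literal (or ⊥) l, and any base B: M,L ⊢_B l holds iff for every base X ⊇ B, if ⊢_X m for every m ∈ M, then L ⊢_X l. -/
theorem Deriv.mono_ctx {C : Type} {B : Base C} {S T : Set (Lit C)} {l : Option (Lit C)}
    (h : Deriv B S l) (hST : S ⊆ T) : Deriv B T l := by
  induction h generalizing T with
  | ref hl => exact .ref (hST hl)
  | app r hr _ ih => exact .app r hr (fun p hp => ih p hp (Set.union_subset_union_right _ hST))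
  | abs _ _ ih1 ih2 => exact .abs (ih1 hST) (ih2 hST)
  | dm _ ih => exact .dm (ih (Set.insert_subset_insert hST))

theorem Deriv.mono_base {C : Type} {B X : Base C} {S : Set (Lit C)} {l : Option (Lit C)}
    (hBX : B ⊆ X) (h : Deriv B S l) : Deriv X S l := by
  induction h with
  | ref hl => exact .ref hl
  | app r hr _ ih => exact .app r (hBX hr) ih
  | abs _ _ ih1 ih2 => exact .abs ih1 ih2
  | dm _ ih => exact .dm ih

theorem Deriv.cut_aux {C : Type} {B : Base C} {M S : Set (Lit C)} {l : Option (Lit C)}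
    (h : Deriv B S l) (hM : ∀ m ∈ M, Deriv B ∅ (some m)) :
    ∀ L : Set (Lit C), S ⊆ M ∪ L → Deriv B L l := by
  induction h with
  | @ref _ l hl =>
    intro L hSL
    rcases hSL hl with hm | hL
    · exact (hM l hm).mono_ctx (Set.empty_subset _)
    · exact .ref hL
  | app r hr _ ih =>
    intro L hSL
    refine .app r hr (fun p hp => ih p hp (p.1 ∪ L) ?_)
    intro x hx
    rcases hx with hx | hx
    · exact Or.inr (Or.inl hx)
    · rcases hSL hx with hm | hL
      · exact Or.inl hm
      · exact Or.inr (Or.inr hL)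
  | abs _ _ ih1 ih2 => exact fun L hSL => .abs (ih1 L hSL) (ih2 L hSL)
  | @dm _ l' _ ih =>
    intro L hSL
    refine .dm (ih (insert l' L) ?_)
    intro x hx
    rcases hx with hx | hx
    · exact Or.inr (Or.inl hx)
    · rcases hSL hx with hm | hL
      · exact Or.inl hm
      · exact Or.inr (Or.inr hL)

/-- atomic cut. -/
theorem Deriv_cut {C : Type} (B : Base C) (M L : Set (Lit C)) (l : Option (Lit C)) :
    Deriv B (M ∪ L) l ↔
      ∀ X : Base C, B ⊆ X → (∀ m ∈ M, Deriv X ∅ (some m)) → Deriv X L l := by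
  constructor
  · intro h X hBX hM
    exact (h.mono_base hBX).cut_aux hM L (subset_refl _)
  · intro h
    set R : Base C := {r | r.prems = [] ∧ r.concl ∈ M} with hR
    have hX : ∀ m ∈ M, Deriv (B ∪ R) ∅ (some m) := by
      intro m hm
      exact Deriv.app ⟨[], m⟩ (Or.inr ⟨rfl, hm⟩) (by simp)
    have hd : Deriv (B ∪ R) L l := h (B ∪ R) Set.subset_union_left hX
    clear h hX
    have key : ∀ {S : Set (Lit C)} {l : Option (Lit C)},
        Deriv (B ∪ R) S l → Deriv B (M ∪ S) l := by
      intro S l hd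
      induction hd with
      | ref hl => exact .ref (Or.inr hl)
      | @app S r hr hp ih =>
        rcases hr with hr | hr
        · refine .app r hr (fun p hp' => (ih p hp').mono_ctx ?_)
          intro x hx
          rcases hx with hx | hx
          · exact Or.inr (Or.inl hx)
          · rcases hx with hx | hx
            · exact Or.inl hx
            · exact Or.inr (Or.inr hx)
        · rw [hR] at hr
          exact .ref (Or.inl hr.2)
      | abs _ _ ih1 ih2 => exact .abs ih1 ih2
      | @dm S l' _ ih =>
        refine .dm (ih.mono_ctx ?_)
        intro x hx
        rcases hx with hx | hx
        · exact Or.inr (Or.inl hx)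
        · rcases hx with hx | hx
          · exact Or.inl hx
          · exact Or.inr (Or.inr hx)
    exact key hd
end

section
/- For any literal l and any base B: l ⊢_B ⊥ holds iff l ⊢_B m holds for every literal m. -/

lemma Lit.dual_dual {C : Type} (l : Lit C) : l.dual.dual = l := by
  cases l <;> rfl

lemma Deriv.mono {C : Type} {B : Base C} {L L' : Set (Lit C)} {o : Option (Lit C)}
    (h : Deriv B L o) (hsub : L ⊆ L') : Deriv B L' o := by
  induction h generalizing L' with
  | ref hm => exact Deriv.ref (hsub hm)
  | app r hr _ ih => exact Deriv.app r hr (fun p hp => ih p hp (Set.union_subset_union_right _ hsub))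
  | abs _ _ ih1 ih2 => exact Deriv.abs (ih1 hsub) (ih2 hsub)
  | dm _ ih => exact Deriv.dm (ih (Set.insert_subset_insert hsub))

/-- `l ⊢_B ⊥` iff `l ⊢_B m` for every literal `m`. -/
theorem Deriv_bot_iff {C : Type} (B : Base C) (l : Lit C) :
    Deriv B {l} none ↔ ∀ m : Lit C, Deriv B {l} (some m) := by
  constructor
  · intro h m
    have := Deriv.dm (l := m.dual) (h.mono (Set.subset_insert _ _))
    rwa [Lit.dual_dual] at this
  · intro h
    exact Deriv.abs (h l) (h l.dual)
end
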